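/- Let n be a positive integer, p ≥ 0 a real number, x a real number, and v, a, b integers with 0 ≤ v < a ≤ b. If Y ~ Poisson(np), then E[(h_{v,x}(Y) − (p − x)^v) · 1_{a ≤ Y ≤ b}] = H_{v,n}(a, p, x) − H_{v,n}(b+1, p, x). -/

import Mathlib

open scoped BigOperators

/-- The Poisson probability mass function with mean `μ`: `Pr(Y = t) = e^{-μ} μ^t / t!`. -/
noncomputable def poissonPMF (μ : ℝ) (t : ℕ) : ℝ := Real.exp (-μ) * μ ^ t / t.factorial

/-- `h_{v,x}(y) = Σ_{l=0}^{v} binom(v,l) (-x)^{v-l} Π_{l'=0}^{l-1} ((y - l')/n)`. -/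
noncomputable def hfun (n : ℕ) (x : ℝ) (v : ℕ) (y : ℝ) : ℝ :=
  ∑ l ∈ Finset.range (v + 1), (v.choose l : ℝ) * (-x) ^ (v - l) *
    ∏ l' ∈ Finset.range l, ((y - l') / n)

/-- `H_{v,n}(s, p, x) = Σ_{l=0}^{v} binom(v,l)(-x)^{v-l} p^l Σ_{t=s-l}^{s-1} e^{-np}(np)^t/t!`. -/
noncomputable def Hfun (n : ℕ) (v s : ℕ) (p x : ℝ) : ℝ :=
  ∑ l ∈ Finset.range (v + 1), (v.choose l : ℝ) * (-x) ^ (v - l) * p ^ l *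
    ∑ t ∈ Finset.Ico (s - l) s, Real.exp (-((n : ℝ) * p)) * ((n : ℝ) * p) ^ t / t.factorial

/-- If `Y ~ Poisson(np)` and `0 ≤ v < a ≤ b`, then
`E[(h_{v,x}(Y) - (p - x)^v) 1_{a ≤ Y ≤ b}] = H_{v,n}(a,p,x) - H_{v,n}(b+1,p,x)`. -/
lemma key_shift (n : ℕ) (hn : 0 < n) (p : ℝ) (l t : ℕ) (hlt : l ≤ t) :
    poissonPMF (n * p) t * ∏ l' ∈ Finset.range l, (((t : ℝ) - l') / n)
      = p ^ l * poissonPMF (n * p) (t - l) := by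
  have hne : (n : ℝ) ≠ 0 := Nat.cast_ne_zero.2 hn.ne'
  have hprod : ∏ l' ∈ Finset.range l, (((t : ℝ) - l') / n)
      = (t.descFactorial l : ℝ) / (n : ℝ) ^ l := by
    rw [Nat.descFactorial_eq_prod_range, Nat.cast_prod, Finset.prod_div_distrib,
      Finset.prod_const, Finset.card_range]
    congr 1
    refine Finset.prod_congr rfl fun i hi => ?_
    have : i ≤ t := le_trans (Finset.mem_range.1 hi).le hlt
    push_cast [Nat.cast_sub this]
    ring
  have hfac : ((t - l).factorial : ℝ) * (t.descFactorial l : ℝ) = (t.factorial : ℝ) := by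
    exact_mod_cast congrArg (Nat.cast (R := ℝ)) (Nat.factorial_mul_descFactorial hlt)
  have hpow : ((n : ℝ) * p) ^ t = ((n : ℝ) * p) ^ (t - l) * ((n : ℝ) * p) ^ l := by
    rw [← pow_add]; congr 1; omega
  simp only [poissonPMF, hprod]
  rw [hpow]
  have h1 : (t.factorial : ℝ) ≠ 0 := Nat.cast_ne_zero.2 t.factorial_ne_zero
  have h2 : ((t - l).factorial : ℝ) ≠ 0 := Nat.cast_ne_zero.2 (t - l).factorial_ne_zero
  field_simp
  linear_combination ((n:ℝ)*p)^(t-l) * (n:ℝ)^l * p^l * hfac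

theorem expectation_hfun_indicator (n : ℕ) (hn : 0 < n) (p : ℝ) (hp : 0 ≤ p) (x : ℝ)
    (v a b : ℕ) (hva : v < a) (hab : a ≤ b) :
    ∑' t : ℕ, poissonPMF (n * p) t * (hfun n x v (t : ℝ) - (p - x) ^ v) *
        (if a ≤ t ∧ t ≤ b then (1 : ℝ) else 0)
      = Hfun n v a p x - Hfun n v (b + 1) p x := by
  set f : ℕ → ℝ := fun t => poissonPMF (n * p) t with hf
  -- step 1: tsum to finite sum over Ico a (b+1)
  rw [tsum_eq_sum (s := Finset.Ico a (b + 1))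
    (fun t ht => by
      rw [if_neg, mul_zero]
      rintro ⟨h1, h2⟩
      exact ht (Finset.mem_Ico.2 ⟨h1, Nat.lt_succ_of_le h2⟩))]
  have hstep1 : ∑ t ∈ Finset.Ico a (b + 1),
      poissonPMF (n * p) t * (hfun n x v (t : ℝ) - (p - x) ^ v) *
        (if a ≤ t ∧ t ≤ b then (1 : ℝ) else 0)
      = ∑ t ∈ Finset.Ico a (b + 1), ∑ l ∈ Finset.range (v + 1),
          (v.choose l : ℝ) * (-x) ^ (v - l) * p ^ l * (f (t - l) - f t) := by
    refine Finset.sum_congr rfl fun t ht => ?_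
    obtain ⟨h1, h2⟩ := Finset.mem_Ico.1 ht
    rw [if_pos ⟨h1, Nat.lt_succ_iff.1 h2⟩, mul_one]
    have hbin : (p - x) ^ v
        = ∑ l ∈ Finset.range (v + 1), p ^ l * (-x) ^ (v - l) * (v.choose l : ℝ) := by
      rw [sub_eq_add_neg, add_pow]
    rw [hbin, hfun, mul_sub, Finset.mul_sum, Finset.mul_sum, ← Finset.sum_sub_distrib]
    refine Finset.sum_congr rfl fun l hl => ?_
    have hlt : l ≤ t := by
      have := Finset.mem_range.1 hl; omega
    have := key_shift n hn p l t hlt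
    rw [show poissonPMF (↑n * p) t * ((v.choose l : ℝ) * (-x) ^ (v - l) *
        ∏ l' ∈ Finset.range l, (((t:ℝ) - l') / n))
      = (v.choose l : ℝ) * (-x) ^ (v - l) *
        (poissonPMF (↑n * p) t * ∏ l' ∈ Finset.range l, (((t:ℝ) - l') / n)) by ring, this]
    simp only [hf]
    ring
  rw [hstep1, Finset.sum_comm]
  -- RHS as a single sum
  have hRHS : Hfun n v a p x - Hfun n v (b + 1) p x
      = ∑ l ∈ Finset.range (v + 1), (v.choose l : ℝ) * (-x) ^ (v - l) * p ^ l *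
          (∑ t ∈ Finset.Ico (a - l) a, f t - ∑ t ∈ Finset.Ico (b + 1 - l) (b + 1), f t) := by
    simp only [Hfun, ← Finset.sum_sub_distrib, hf, poissonPMF]
    exact Finset.sum_congr rfl fun l _ => by ring
  rw [hRHS]
  refine Finset.sum_congr rfl fun l hl => ?_
  have hla : l ≤ a := by have := Finset.mem_range.1 hl; omega
  rw [← Finset.mul_sum]
  congr 1
  rw [Finset.sum_sub_distrib]
  have hshift : ∑ t ∈ Finset.Ico a (b + 1), f (t - l)
      = ∑ t ∈ Finset.Ico (a - l) (b + 1 - l), f t := by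
    rw [Finset.sum_Ico_eq_sum_range, Finset.sum_Ico_eq_sum_range]
    rw [show b + 1 - l - (a - l) = b + 1 - a by omega]
    exact Finset.sum_congr rfl fun i _ => by rw [show a + i - l = a - l + i by omega]
  rw [hshift,
    Finset.sum_Ico_eq_sub f (show a - l ≤ b + 1 - l by omega),
    Finset.sum_Ico_eq_sub f (show a ≤ b + 1 by omega),
    Finset.sum_Ico_eq_sub f (show a - l ≤ a by omega),
    Finset.sum_Ico_eq_sub f (show b + 1 - l ≤ b + 1 by omega)]
  ring
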